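/- Let ζ_1, ζ_2, γ : [0, ∞) → ℝ be differentiable functions satisfying the system dζ_1/dt = -sin(ζ_1) sin(ζ_2) cos(2γ + ζ_1 + ζ_2), dζ_2/dt = sin(ζ_2) sin(ζ_1) cos(2γ + ζ_1 + ζ_2), dγ/dt = sin(γ) sin(ζ_1 - ζ_2) cos(γ + ζ_1 + ζ_2), with initial data satisfying ζ_1(0) + ζ_2(0) = π/4 and γ(0) = ζ_2(0). Then for all t ≥ 0 one has ζ_1(t) + ζ_2(t) = π/4 and γ(t) = ζ_2(t); consequently γ satisfies the scalar ODE dγ/dt = sin(γ) sin(π/4 - 2γ) cos(γ + π/4). -/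

import Mathlib

open Real Set

private lemma trig_id (a : ℝ) :
    sin (π/4 - 2*a) * cos (a + π/4) = sin (π/4 - a) * cos (2*a + π/4) := by
  rw [sin_sub, sin_sub, cos_add, cos_add, sin_two_mul, cos_two_mul, sin_pi_div_four,
    cos_pi_div_four]
  nlinarith [sin_sq_add_cos_sq a, Real.sq_sqrt (by norm_num : (2:ℝ) ≥ 0)]

private lemma sin_lip (x y : ℝ) : |sin x - sin y| ≤ |x - y| := by
  rw [Real.sin_sub_sin]
  calc |2 * sin ((x - y) / 2) * cos ((x + y) / 2)|
      = 2 * |sin ((x - y) / 2)| * |cos ((x + y) / 2)| := by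
        rw [abs_mul, abs_mul]; norm_num
    _ ≤ 2 * |(x - y) / 2| * 1 := by
        nlinarith [Real.abs_sin_le_abs (x := (x - y) / 2), abs_cos_le_one ((x + y) / 2),
          abs_nonneg (sin ((x - y) / 2)), abs_nonneg (cos ((x + y) / 2)),
          abs_nonneg ((x - y) / 2)]
    _ = |x - y| := by rw [abs_div, abs_two]; ring

private lemma cos_lip (x y : ℝ) : |cos x - cos y| ≤ |x - y| := by
  rw [Real.cos_sub_cos]
  calc |-2 * sin ((x + y) / 2) * sin ((x - y) / 2)|
      = 2 * |sin ((x - y) / 2)| * |sin ((x + y) / 2)| := by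
        rw [abs_mul, abs_mul]; norm_num; ring
    _ ≤ 2 * |(x - y) / 2| * 1 := by
        nlinarith [Real.abs_sin_le_abs (x := (x - y) / 2), abs_sin_le_one ((x + y) / 2),
          abs_nonneg (sin ((x - y) / 2)), abs_nonneg (sin ((x + y) / 2)),
          abs_nonneg ((x - y) / 2)]
    _ = |x - y| := by rw [abs_div, abs_two]; ring

private lemma key_bound (a b : ℝ) :
    |sin b * sin (π/4 - 2*a) * cos (b + π/4) - sin a * sin (π/4 - a) * cos (2*b + π/4)|
      ≤ 4 * |b - a| := by
  have hid := trig_id a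
  have e : sin b * sin (π/4 - 2*a) * cos (b + π/4) - sin a * sin (π/4 - a) * cos (2*b + π/4)
      = (sin b - sin a) * sin (π/4 - 2*a) * cos (b + π/4)
        + sin a * sin (π/4 - 2*a) * (cos (b + π/4) - cos (a + π/4))
        + sin a * sin (π/4 - a) * (cos (2*a + π/4) - cos (2*b + π/4)) := by
    linear_combination (sin a) * hid
  rw [e]
  have hs1 : |sin b - sin a| ≤ |b - a| := sin_lip b a
  have hc1 : |cos (b + π/4) - cos (a + π/4)| ≤ |b - a| := by
    have := cos_lip (b + π/4) (a + π/4)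
    simpa using this
  have hc2 : |cos (2*a + π/4) - cos (2*b + π/4)| ≤ 2 * |b - a| := by
    have := cos_lip (2*a + π/4) (2*b + π/4)
    calc |cos (2*a + π/4) - cos (2*b + π/4)| ≤ |2*a + π/4 - (2*b + π/4)| := this
      _ = 2 * |b - a| := by rw [show 2*a + π/4 - (2*b + π/4) = -(2*(b-a)) by ring,
            abs_neg, abs_mul]; norm_num
  have B1 : |(sin b - sin a) * sin (π/4 - 2*a) * cos (b + π/4)| ≤ |b - a| := by
    rw [abs_mul, abs_mul]
    calc |sin b - sin a| * |sin (π/4 - 2*a)| * |cos (b + π/4)|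
        ≤ |b - a| * 1 * 1 := by
          gcongr <;> first | exact abs_sin_le_one _ | exact abs_cos_le_one _
      _ = |b - a| := by ring
  have B2 : |sin a * sin (π/4 - 2*a) * (cos (b + π/4) - cos (a + π/4))| ≤ |b - a| := by
    rw [abs_mul, abs_mul]
    calc |sin a| * |sin (π/4 - 2*a)| * |cos (b + π/4) - cos (a + π/4)|
        ≤ 1 * 1 * |b - a| := by
          gcongr <;> first | exact abs_sin_le_one _ | exact hc1
      _ = |b - a| := by ring
  have B3 : |sin a * sin (π/4 - a) * (cos (2*a + π/4) - cos (2*b + π/4))| ≤ 2 * |b - a| := by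
    rw [abs_mul, abs_mul]
    calc |sin a| * |sin (π/4 - a)| * |cos (2*a + π/4) - cos (2*b + π/4)|
        ≤ 1 * 1 * (2 * |b - a|) := by
          gcongr <;> first | exact abs_sin_le_one _ | exact hc2
      _ = 2 * |b - a| := by ring
  calc |(sin b - sin a) * sin (π/4 - 2*a) * cos (b + π/4)
        + sin a * sin (π/4 - 2*a) * (cos (b + π/4) - cos (a + π/4))
        + sin a * sin (π/4 - a) * (cos (2*a + π/4) - cos (2*b + π/4))|
      ≤ |(sin b - sin a) * sin (π/4 - 2*a) * cos (b + π/4)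
        + sin a * sin (π/4 - 2*a) * (cos (b + π/4) - cos (a + π/4))|
        + |sin a * sin (π/4 - a) * (cos (2*a + π/4) - cos (2*b + π/4))| := abs_add_le _ _
    _ ≤ (|(sin b - sin a) * sin (π/4 - 2*a) * cos (b + π/4)|
        + |sin a * sin (π/4 - 2*a) * (cos (b + π/4) - cos (a + π/4))|)
        + |sin a * sin (π/4 - a) * (cos (2*a + π/4) - cos (2*b + π/4))| := by
          gcongr; exact abs_add_le _ _
    _ ≤ (|b - a| + |b - a|) + 2 * |b - a| := by gcongr
    _ = 4 * |b - a| := by ring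

/-- the set `{ζ₁ + ζ₂ = π/4, γ = ζ₂}` is invariant under the two-sector
angle dynamics, and on it `γ` satisfies the reduced scalar ODE
`dγ/dt = sin(γ) sin(π/4 - 2γ) cos(γ + π/4)`. -/
theorem invariant_set_and_reduction
    (ζ₁ ζ₂ γ : ℝ → ℝ)
    (hζ₁ : ∀ t ∈ Set.Ici (0 : ℝ), HasDerivWithinAt ζ₁
      (-Real.sin (ζ₁ t) * Real.sin (ζ₂ t) * Real.cos (2 * γ t + ζ₁ t + ζ₂ t))
      (Set.Ici (0 : ℝ)) t)
    (hζ₂ : ∀ t ∈ Set.Ici (0 : ℝ), HasDerivWithinAt ζ₂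
      (Real.sin (ζ₂ t) * Real.sin (ζ₁ t) * Real.cos (2 * γ t + ζ₁ t + ζ₂ t))
      (Set.Ici (0 : ℝ)) t)
    (hγ : ∀ t ∈ Set.Ici (0 : ℝ), HasDerivWithinAt γ
      (Real.sin (γ t) * Real.sin (ζ₁ t - ζ₂ t) * Real.cos (γ t + ζ₁ t + ζ₂ t))
      (Set.Ici (0 : ℝ)) t)
    (hinit_sum : ζ₁ 0 + ζ₂ 0 = π / 4)
    (hinit_γ : γ 0 = ζ₂ 0) :
    (∀ t ∈ Set.Ici (0 : ℝ), ζ₁ t + ζ₂ t = π / 4 ∧ γ t = ζ₂ t) ∧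
    (∀ t ∈ Set.Ici (0 : ℝ), HasDerivWithinAt γ
      (Real.sin (γ t) * Real.sin (π / 4 - 2 * γ t) * Real.cos (γ t + π / 4))
      (Set.Ici (0 : ℝ)) t) := by
  -- step 1: ζ₁ + ζ₂ ≡ π/4
  have hsum : ∀ t ∈ Set.Ici (0 : ℝ), ζ₁ t + ζ₂ t = π / 4 := by
    intro b hb
    set f : ℝ → ℝ := fun t => ζ₁ t + ζ₂ t - π / 4 with hf
    have hder : ∀ x ∈ Set.Ici (0 : ℝ), HasDerivWithinAt f 0 (Set.Ici (0 : ℝ)) x := by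
      intro x hx
      have h : HasDerivWithinAt (fun t => ζ₁ t + ζ₂ t - π / 4)
          (-Real.sin (ζ₁ x) * Real.sin (ζ₂ x) * Real.cos (2 * γ x + ζ₁ x + ζ₂ x)
            + Real.sin (ζ₂ x) * Real.sin (ζ₁ x) * Real.cos (2 * γ x + ζ₁ x + ζ₂ x))
          (Set.Ici (0 : ℝ)) x := ((hζ₁ x hx).add (hζ₂ x hx)).sub_const (π / 4)
      convert h using 1
      ring
    have hcont : ContinuousOn f (Set.Icc 0 b) :=
      fun x hx => ((hder x hx.1).continuousWithinAt).mono (Set.Icc_subset_Ici_self)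
    have := norm_le_gronwallBound_of_norm_deriv_right_le (δ := 0) (K := 0) (ε := 0)
      hcont
      (fun x hx => (hder x hx.1).mono (Set.Ici_subset_Ici.mpr hx.1))
      (by simp [hf, hinit_sum]) (fun x hx => by simp) b (Set.mem_Icc.mpr ⟨hb, le_refl b⟩)
    rw [gronwallBound_ε0_δ0] at this
    have : f b = 0 := by simpa [norm_eq_abs, abs_nonpos_iff] using this
    simpa [hf, sub_eq_zero] using this
  -- step 2: γ ≡ ζ₂
  have hgz : ∀ t ∈ Set.Ici (0 : ℝ), γ t = ζ₂ t := by
    intro b hb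
    set u : ℝ → ℝ := fun t => γ t - ζ₂ t with hu
    set u' : ℝ → ℝ := fun t =>
      Real.sin (γ t) * Real.sin (ζ₁ t - ζ₂ t) * Real.cos (γ t + ζ₁ t + ζ₂ t)
        - Real.sin (ζ₂ t) * Real.sin (ζ₁ t) * Real.cos (2 * γ t + ζ₁ t + ζ₂ t) with hu'
    have hder : ∀ x ∈ Set.Ici (0 : ℝ), HasDerivWithinAt u (u' x) (Set.Ici (0 : ℝ)) x :=
      fun x hx => (hγ x hx).sub (hζ₂ x hx)
    have hcont : ContinuousOn u (Set.Icc 0 b) :=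
      fun x hx => ((hder x hx.1).continuousWithinAt).mono (Set.Icc_subset_Ici_self)
    have hbound : ∀ x ∈ Set.Ico (0 : ℝ) b, ‖u' x‖ ≤ 4 * ‖u x‖ + 0 := by
      intro x hx
      have h1 : ζ₁ x = π / 4 - ζ₂ x := by
        have := hsum x hx.1; linarith
      have e1 : ζ₁ x - ζ₂ x = π/4 - 2 * ζ₂ x := by rw [h1]; ring
      have e2 : γ x + ζ₁ x + ζ₂ x = γ x + π/4 := by rw [h1]; ring
      have e3 : 2 * γ x + ζ₁ x + ζ₂ x = 2 * γ x + π/4 := by rw [h1]; ring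
      have := key_bound (ζ₂ x) (γ x)
      simp only [hu', hu, norm_eq_abs, add_zero]
      rw [e1, e2, e3, h1]
      simpa using this
    have := norm_le_gronwallBound_of_norm_deriv_right_le (δ := 0) (K := 4) (ε := 0)
      hcont
      (fun x hx => (hder x hx.1).mono (Set.Ici_subset_Ici.mpr hx.1))
      (by simp [hu, hinit_γ]) hbound b (Set.mem_Icc.mpr ⟨hb, le_refl b⟩)
    rw [gronwallBound_ε0_δ0] at this
    have : u b = 0 := by simpa [norm_eq_abs, abs_nonpos_iff] using this
    simpa [hu, sub_eq_zero] using this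
  refine ⟨fun t ht => ⟨hsum t ht, hgz t ht⟩, fun t ht => ?_⟩
  have h1 := hsum t ht
  have h2 := hgz t ht
  have e1 : ζ₁ t - ζ₂ t = π/4 - 2 * γ t := by rw [h2]; linarith
  have e2 : γ t + ζ₁ t + ζ₂ t = γ t + π/4 := by linarith
  have h := hγ t ht
  rw [e1, e2] at h
  exact h
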